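/- Let C be a ∏_{i=1}^n Z_{2^i}-additive cyclic code in ∏_{i=1}^n Z_{2^i}^{α_i}. Then its dual C^⊥ with respect to the inner product u·v = [Σ_{i=1}^n 2^{n−i} Σ_{j=1}^{α_i} u_{ij} v_{ij}] mod 2^n is also a ∏_{i=1}^n Z_{2^i}-additive cyclic code; that is, C^⊥ is an additive subgroup closed under the cyclic shift T. -/

import Mathlib

/-- The ambient space `∏_{i=1}^n Z_{2^i}^{α_i}` (0-indexed: block `i` has entries in
`Z_{2^{i+1}}`). -/
abbrev Amb (n : ℕ) (α : Fin n → ℕ) := ∀ i : Fin n, Fin (α i) → ZMod (2 ^ (i.1 + 1))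

/-- The simultaneous cyclic shift `T`: each block is shifted cyclically,
`T(v)_{i,j} = v_{i,j-1}` (indices mod `α i`). -/
def shiftT {n : ℕ} {α : Fin n → ℕ} (v : Amb n α) : Amb n α :=
  fun i j => v i ((finRotate (α i)).symm j)

/-- The inner product `u·v = [Σ_i 2^{n−i} Σ_j u_{ij} v_{ij}] mod 2^n`, entries lifted
to the integers. -/
def innerZ {n : ℕ} {α : Fin n → ℕ} (u v : Amb n α) : ZMod (2 ^ n) :=
  ∑ i : Fin n, (2 : ZMod (2 ^ n)) ^ (n - 1 - i.1) *
    ∑ j : Fin (α i), ((u i j).val : ZMod (2 ^ n)) * ((v i j).val : ZMod (2 ^ n))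

lemma pow_weight_mul_block (n : ℕ) (i : Fin n) :
    (2 : ZMod (2 ^ n)) ^ (n - 1 - i.1) * ((2 ^ (i.1 + 1) : ℕ) : ZMod (2 ^ n)) = 0 := by
  push_cast
  rw [← pow_add]
  have h : n - 1 - i.1 + (i.1 + 1) = n := by omega
  rw [h]
  have := ZMod.natCast_self (2 ^ n)
  push_cast at this
  exact this

lemma key_add (n : ℕ) (i : Fin n) (a b : ZMod (2 ^ (i.1 + 1))) :
    (2 : ZMod (2 ^ n)) ^ (n - 1 - i.1) * (((a + b).val : ℕ) : ZMod (2 ^ n)) =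
    (2 : ZMod (2 ^ n)) ^ (n - 1 - i.1) * (((a.val : ℕ) : ZMod (2 ^ n)) + ((b.val : ℕ) : ZMod (2 ^ n))) := by
  have h : (a.val + b.val) = (a + b).val + 2 ^ (i.1 + 1) * ((a.val + b.val) / 2 ^ (i.1 + 1)) := by
    rw [ZMod.val_add]
    exact (Nat.mod_add_div _ _).symm
  have h2 : (((a.val : ℕ) : ZMod (2 ^ n)) + ((b.val : ℕ) : ZMod (2 ^ n))) =
      (((a + b).val : ℕ) : ZMod (2 ^ n)) +
        ((2 ^ (i.1 + 1) : ℕ) : ZMod (2 ^ n)) * (((a.val + b.val) / 2 ^ (i.1 + 1) : ℕ) : ZMod (2 ^ n)) := by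
    rw [← Nat.cast_add, ← Nat.cast_mul, ← Nat.cast_add]
    exact congrArg _ h
  rw [h2, mul_add, ← mul_assoc, pow_weight_mul_block, zero_mul, add_zero]

lemma key_neg (n : ℕ) (i : Fin n) (a : ZMod (2 ^ (i.1 + 1))) :
    (2 : ZMod (2 ^ n)) ^ (n - 1 - i.1) * (((-a).val : ℕ) : ZMod (2 ^ n)) =
    -((2 : ZMod (2 ^ n)) ^ (n - 1 - i.1) * ((a.val : ℕ) : ZMod (2 ^ n))) := by
  have h := key_add n i a (-a)
  rw [add_neg_cancel] at h
  have h0 : ((0 : ZMod (2 ^ (i.1 + 1))).val : ℕ) = 0 := ZMod.val_zero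
  rw [h0] at h
  simp only [Nat.cast_zero, mul_zero, mul_add] at h
  linear_combination -h

lemma innerZ_zero_right {n : ℕ} {α : Fin n → ℕ} (u : Amb n α) :
    innerZ u (0 : Amb n α) = 0 := by
  simp [innerZ, ZMod.val_zero]

lemma innerZ_add_right {n : ℕ} {α : Fin n → ℕ} (u v w : Amb n α) :
    innerZ u (v + w) = innerZ u v + innerZ u w := by
  unfold innerZ
  rw [← Finset.sum_add_distrib]
  refine Finset.sum_congr rfl fun i _ => ?_
  rw [← mul_add, ← Finset.sum_add_distrib]
  rw [Finset.mul_sum, Finset.mul_sum]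
  refine Finset.sum_congr rfl fun j _ => ?_
  have hvw : (v + w) i j = v i j + w i j := rfl
  rw [hvw]
  have h := key_add n i (v i j) (w i j)
  calc (2 : ZMod (2 ^ n)) ^ (n - 1 - i.1) * (((u i j).val : ZMod (2 ^ n)) * (((v i j + w i j).val : ℕ) : ZMod (2 ^ n)))
      = ((u i j).val : ZMod (2 ^ n)) * ((2 : ZMod (2 ^ n)) ^ (n - 1 - i.1) * (((v i j + w i j).val : ℕ) : ZMod (2 ^ n))) := by ring
    _ = ((u i j).val : ZMod (2 ^ n)) * ((2 : ZMod (2 ^ n)) ^ (n - 1 - i.1) * ((((v i j).val : ℕ) : ZMod (2 ^ n)) + (((w i j).val : ℕ) : ZMod (2 ^ n)))) := by rw [h]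
    _ = _ := by ring

lemma innerZ_neg_right {n : ℕ} {α : Fin n → ℕ} (u v : Amb n α) :
    innerZ u (-v) = -innerZ u v := by
  unfold innerZ
  rw [← Finset.sum_neg_distrib]
  refine Finset.sum_congr rfl fun i _ => ?_
  rw [← mul_neg, ← Finset.sum_neg_distrib, Finset.mul_sum, Finset.mul_sum]
  refine Finset.sum_congr rfl fun j _ => ?_
  have hv : (-v) i j = -(v i j) := rfl
  rw [hv]
  have h := key_neg n i (v i j)
  calc (2 : ZMod (2 ^ n)) ^ (n - 1 - i.1) * (((u i j).val : ZMod (2 ^ n)) * ((((-(v i j)).val : ℕ)) : ZMod (2 ^ n)))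
      = ((u i j).val : ZMod (2 ^ n)) * ((2 : ZMod (2 ^ n)) ^ (n - 1 - i.1) * ((((-(v i j)).val : ℕ)) : ZMod (2 ^ n))) := by ring
    _ = ((u i j).val : ZMod (2 ^ n)) * (-((2 : ZMod (2 ^ n)) ^ (n - 1 - i.1) * (((v i j).val : ℕ) : ZMod (2 ^ n)))) := by rw [h]
    _ = _ := by ring

/-- Reverse shift: `revShift u i j = u i (finRotate (α i) j)`. -/
def revShift {n : ℕ} {α : Fin n → ℕ} (u : Amb n α) : Amb n α :=
  fun i j => u i (finRotate (α i) j)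

lemma innerZ_shift {n : ℕ} {α : Fin n → ℕ} (u v : Amb n α) :
    innerZ u (shiftT v) = innerZ (revShift u) v := by
  unfold innerZ shiftT revShift
  refine Finset.sum_congr rfl fun i _ => ?_
  congr 1
  rw [← Equiv.sum_comp (finRotate (α i))
    (fun j => ((u i j).val : ZMod (2 ^ n)) * (((v i ((finRotate (α i)).symm j)).val : ℕ) : ZMod (2 ^ n)))]
  refine Finset.sum_congr rfl fun j _ => ?_
  rw [Equiv.symm_apply_apply]

open Fin.NatCast in
lemma finRotate_iterate (m k : ℕ) (j : Fin (m + 1)) :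
    (finRotate (m + 1))^[k] j = j + (k : Fin (m + 1)) := by
  induction k with
  | zero => simp
  | succ k ih =>
    rw [Function.iterate_succ_apply', ih, finRotate_succ_apply]
    push_cast
    rw [add_assoc]

open Fin.NatCast in
lemma finRotate_iterate_self (m : ℕ) (hm : 0 < m) :
    (finRotate m)^[m] = id := by
  obtain ⟨m', rfl⟩ := Nat.exists_eq_succ_of_ne_zero hm.ne'
  funext j
  rw [finRotate_iterate]
  simp [Fin.natCast_self]

lemma iterate_symm_cancel {β : Type*} (e : Equiv.Perm β) (k : ℕ) (x : β) :
    (⇑e)^[k] ((⇑e.symm)^[k] x) = x := by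
  induction k generalizing x with
  | zero => rfl
  | succ k ih =>
    rw [Function.iterate_succ_apply' (⇑e), Function.iterate_succ_apply (⇑e.symm), ih,
      Equiv.apply_symm_apply]

lemma shiftT_iterate {n : ℕ} {α : Fin n → ℕ} (k : ℕ) (v : Amb n α) (i : Fin n) (j : Fin (α i)) :
    (shiftT^[k] v) i j = v i (((finRotate (α i)).symm)^[k] j) := by
  induction k generalizing v with
  | zero => rfl
  | succ k ih =>
    rw [Function.iterate_succ_apply]
    show (shiftT^[k] (shiftT v)) i j = _
    rw [ih]
    show v i ((finRotate (α i)).symm (((finRotate (α i)).symm)^[k] j)) = _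
    rw [← Function.iterate_succ_apply' (⇑(finRotate (α i)).symm)]

lemma revShift_mem {n : ℕ} {α : Fin n → ℕ} (hα : ∀ i, 0 < α i) (C : Set (Amb n α))
    (hT : ∀ u, u ∈ C → shiftT u ∈ C) (u : Amb n α) (hu : u ∈ C) : revShift u ∈ C := by
  set K : ℕ := ∏ i, α i with hK
  have hKpos : 0 < K := Finset.prod_pos fun i _ => hα i
  have hmem : ∀ k w, w ∈ C → shiftT^[k] w ∈ C := by
    intro k
    induction k with
    | zero => exact fun w hw => hw
    | succ k ih =>
      intro w hw
      rw [Function.iterate_succ_apply]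
      exact ih _ (hT w hw)
  have heq : shiftT^[K - 1] u = revShift u := by
    funext i j
    rw [shiftT_iterate]
    unfold revShift
    congr 1
    -- show ((finRotate (α i)).symm)^[K-1] j = finRotate (α i) j
    have hdvd : α i ∣ K := Finset.dvd_prod_of_mem α (Finset.mem_univ i)
    obtain ⟨t, ht⟩ := hdvd
    have hid : (finRotate (α i))^[K] = id := by
      rw [ht, Function.iterate_mul, finRotate_iterate_self (α i) (hα i)]
      exact Function.iterate_id t
    have hinj : Function.Injective ((finRotate (α i))^[K - 1]) :=
      Function.Injective.iterate (finRotate (α i)).injective _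
    apply hinj
    rw [iterate_symm_cancel, ← Function.iterate_succ_apply]
    have hK1 : K - 1 + 1 = K := by omega
    simp only [Nat.succ_eq_add_one, hK1, hid, id_eq]
  rw [← heq]
  exact hmem _ u hu

/-- if `C` is an additive cyclic code (an additive subgroup closed under
the shift `T`), then its dual `C^⊥` is also an additive subgroup closed under `T`. -/
theorem stmt_1 (n : ℕ) (hn : 1 ≤ n) (α : Fin n → ℕ) (hα : ∀ i, 0 < α i)
    (C : Set (Amb n α)) (h0 : 0 ∈ C)
    (hadd : ∀ u v, u ∈ C → v ∈ C → u + v ∈ C)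
    (hneg : ∀ u, u ∈ C → -u ∈ C)
    (hT : ∀ u, u ∈ C → shiftT u ∈ C) :
    (0 : Amb n α) ∈ {v | ∀ u ∈ C, innerZ u v = 0} ∧
    (∀ v w, v ∈ {v | ∀ u ∈ C, innerZ u v = 0} → w ∈ {v | ∀ u ∈ C, innerZ u v = 0} →
      v + w ∈ {v | ∀ u ∈ C, innerZ u v = 0}) ∧
    (∀ v, v ∈ {v | ∀ u ∈ C, innerZ u v = 0} → -v ∈ {v | ∀ u ∈ C, innerZ u v = 0}) ∧
    (∀ v, v ∈ {v | ∀ u ∈ C, innerZ u v = 0} → shiftT v ∈ {v | ∀ u ∈ C, innerZ u v = 0}) := by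
  refine ⟨fun u hu => innerZ_zero_right u, ?_, ?_, ?_⟩
  · intro v w hv hw u hu
    rw [innerZ_add_right, hv u hu, hw u hu, add_zero]
  · intro v hv u hu
    rw [innerZ_neg_right, hv u hu, neg_zero]
  · intro v hv u hu
    rw [innerZ_shift]
    exact hv _ (revShift_mem hα C hT u hu)
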